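/- No strictly decreasing ω-sequence of subTuring degrees has an infimum: if (g_n) is a sequence of partial functions with g_{n+1} <subT g_n for all n, and h is any lower bound (h ≤subT g_n for all n), then there exists a partial function f such that f ≤subT g_n for all n but f is not subTuring reducible to h. -/

import Mathlib

open Classical

noncomputable section

/-- `as` is a valid answer history for the sequential oracle computation of `Φ`
with oracle `g` on input `n`: at each round `k`, the machine outputs a query
`(false, q)` with `q` in the domain of `g`, answered by `g q = as[k]`. -/
def ValidHist (Φ : List ℕ →. Bool × ℕ) (g : ℕ →. ℕ) (n : ℕ) (as : List ℕ) : Prop :=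
  ∀ (k : ℕ) (hk : k < as.length), ∃ q : ℕ,
    (false, q) ∈ Φ (n :: as.take k) ∧ (as[k]'hk) ∈ g q

/-- The sequential oracle computation `Φ[g](n)` halts with output `m`. -/
def HaltsTo (Φ : List ℕ →. Bool × ℕ) (g : ℕ →. ℕ) (n m : ℕ) : Prop :=
  ∃ as : List ℕ, ValidHist Φ g n as ∧ (true, m) ∈ Φ (n :: as)

/-- subTuring reducibility: `f ⊆ Φ[g]` for some partial computable `Φ`. -/
def SubTuringLE (f g : ℕ →. ℕ) : Prop :=
  ∃ Φ : List ℕ →. Bool × ℕ, Partrec Φ ∧ ∀ n m, m ∈ f n → HaltsTo Φ g n m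

/-- subTuring equivalence. -/
def SubTuringEquiv (f g : ℕ →. ℕ) : Prop := SubTuringLE f g ∧ SubTuringLE g f

set_option maxHeartbeats 1000000

open Nat.Partrec (Code)
open Nat.Partrec.Code

def PsiU (e : ℕ) (l : List ℕ) : Part (Bool × ℕ) :=
  ((Denumerable.ofNat Code e).eval (Encodable.encode l)).bind
    fun n => Part.ofOption (Encodable.decode n)

theorem psiU_partrec : Partrec₂ PsiU := by
  have h1 : Partrec₂ fun (e : ℕ) (l : List ℕ) =>
      (Denumerable.ofNat Code e).eval (Encodable.encode l) :=
    eval_part.comp ((Computable.ofNat Code).comp .fst) (Computable.encode.comp .snd)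
  exact h1.bind (Computable.ofOption (Computable.decode.comp Computable.snd)).to₂

theorem psiU_partrec_one (e : ℕ) : Partrec (PsiU e) :=
  psiU_partrec.comp (Computable.const e) Computable.id

theorem exists_psiU {Φ : List ℕ →. Bool × ℕ} (hΦ : Partrec Φ) : ∃ e, PsiU e = Φ := by
  unfold Partrec at hΦ
  obtain ⟨c, hc⟩ := exists_code.1 hΦ
  refine ⟨Encodable.encode c, funext fun l => ?_⟩
  simp only [PsiU, Denumerable.ofNat_encode, hc]
  simp [Encodable.encodek]
  ext x
  simp [Part.mem_bind_iff, Encodable.encodek]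
  constructor
  · rintro (⟨b, hb, rfl⟩ | ⟨b, hb, rfl⟩) <;> exact hb
  · intro hx
    rcases x with ⟨b, n⟩
    cases b
    · exact Or.inl ⟨n, hx, rfl⟩
    · exact Or.inr ⟨n, hx, rfl⟩

/-- reduction by an explicit code -/
def Red (c : ℕ) (f g : ℕ →. ℕ) : Prop := ∀ n m, m ∈ f n → HaltsTo (PsiU c) g n m

theorem subTuringLE_iff {f g : ℕ →. ℕ} : SubTuringLE f g ↔ ∃ c, Red c f g := by
  constructor
  · rintro ⟨Φ, hΦ, hred⟩
    obtain ⟨e, he⟩ := exists_psiU hΦ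
    exact ⟨e, by rw [Red, he]; exact hred⟩
  · rintro ⟨c, hc⟩
    exact ⟨PsiU c, psiU_partrec_one c, hc⟩

/-- transfer of HaltsTo along machines that agree with a transformed head -/
theorem haltsTo_congr {Φ Φ' : List ℕ →. Bool × ℕ} {o : ℕ →. ℕ} {x y m : ℕ}
    (hc : ∀ as, Φ' (x :: as) = Φ (y :: as)) :
    HaltsTo Φ o y m → HaltsTo Φ' o x m := by
  rintro ⟨as, hv, hm⟩
  refine ⟨as, fun k hk => ?_, by rw [hc]; exact hm⟩
  obtain ⟨q, hq, ha⟩ := hv k hk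
  exact ⟨q, by rw [hc]; exact hq, ha⟩

/-- code of a machine that immediately outputs `r` -/
def constCode (r : Bool × ℕ) : ℕ :=
  Encodable.encode (Code.const (Encodable.encode r))

theorem psiU_constCode (r : Bool × ℕ) (l : List ℕ) : PsiU (constCode r) l = Part.some r := by
  unfold PsiU constCode
  rw [Denumerable.ofNat_encode, eval_const]
  rw [show ((Part.some (Encodable.encode r)).bind fun n => Part.ofOption (Encodable.decode n)) =
    Part.ofOption (Encodable.decode (Encodable.encode r)) from Part.bind_some _ _]
  rw [Encodable.encodek]
  rfl

theorem haltsTo_constCode {o : ℕ →. ℕ} {x m : ℕ} : HaltsTo (PsiU (constCode (true, m))) o x m :=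
  ⟨[], fun k hk => by simp at hk, by rw [psiU_constCode]; exact Part.mem_some _⟩

def idO (l : List ℕ) : Option (Bool × ℕ) :=
  if l.length = 1 then some (false, l.headI)
  else if l.length = 2 then some (true, l.tail.headI) else none

theorem idO_primrec : Primrec idO := by
  have hlen : Primrec fun l : List ℕ => l.length := Primrec.list_length
  refine Primrec.ite (Primrec.eq.comp hlen (Primrec.const 1))
    (Primrec.option_some.comp ((Primrec.const false).pair Primrec.list_headI))
    (Primrec.ite (Primrec.eq.comp hlen (Primrec.const 2))
      (Primrec.option_some.comp ((Primrec.const true).pair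
        (Primrec.list_headI.comp Primrec.list_tail)))
      (Primrec.const none))

def idMach : List ℕ →. Bool × ℕ := fun l => Part.ofOption (idO l)

theorem idMach_partrec : Partrec idMach := Computable.ofOption idO_primrec.to_comp

abbrev CState := ℕ × List ℕ × Option (ℕ × List ℕ) × List ℕ
abbrev Pt := CState × (Bool × ℕ)
abbrev Zt := Pt × (ℕ × List ℕ)

def inC (s : CState) : List ℕ :=
  Option.casesOn s.2.2.1 (s.1 :: s.2.1) (fun qp => qp.1 :: qp.2)

def selC (cf cp : ℕ) (s : CState) : ℕ :=
  Option.casesOn s.2.2.1 cf (fun _ => cp)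

def contC (s : CState) (r : Bool × ℕ) : Option ((Bool × ℕ) ⊕ CState) :=
  Option.casesOn s.2.2.1
    (bif r.1 then (List.casesOn s.2.2.2 (some (Sum.inl r)) fun _ _ => none)
     else some (Sum.inr (s.1, s.2.1, some (r.2, ([] : List ℕ)), s.2.2.2)))
    fun qp =>
      bif r.1 then some (Sum.inr (s.1, s.2.1 ++ [r.2], none, s.2.2.2))
      else List.casesOn s.2.2.2 (some (Sum.inl ((false, r.2) : Bool × ℕ)))
        fun a rest => some (Sum.inr (s.1, s.2.1, some (qp.1, qp.2 ++ [a]), rest))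

def cstep (cf cp : ℕ) (s : CState) : Part ((Bool × ℕ) ⊕ CState) :=
  (PsiU (selC cf cp s) (inC s)).bind fun r => Part.ofOption (contC s r)

def compM (cf cp : ℕ) : List ℕ →. Bool × ℕ := fun l =>
  (Part.ofOption l.head?).bind fun x => PFun.fix (cstep cf cp) (x, [], none, l.tail)

theorem inC_primrec : Primrec inC := by
  have hpd : Primrec (fun s : CState => s.2.2.1) := Primrec.fst.comp (Primrec.snd.comp Primrec.snd)
  have := Primrec.option_casesOn (o := fun s : CState => s.2.2.1)
    (f := fun s : CState => s.1 :: s.2.1)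
    (g := fun (_ : CState) (qp : ℕ × List ℕ) => qp.1 :: qp.2) hpd
    (Primrec.list_cons.comp Primrec.fst (Primrec.fst.comp Primrec.snd))
    ((Primrec.list_cons.comp (Primrec.fst.comp Primrec.snd)
      (Primrec.snd.comp Primrec.snd)).to₂)
  exact this.of_eq fun s => by rcases s with ⟨x, fh, _ | ⟨q, ph⟩, rest⟩ <;> rfl

theorem selC_primrec (cf cp : ℕ) : Primrec (selC cf cp) := by
  have hpd : Primrec (fun s : CState => s.2.2.1) := Primrec.fst.comp (Primrec.snd.comp Primrec.snd)
  have := Primrec.option_casesOn (o := fun s : CState => s.2.2.1) (f := fun _ : CState => cf)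
    (g := fun (_ : CState) (_ : ℕ × List ℕ) => cp) hpd
    (Primrec.const cf) ((Primrec.const cp).to₂)
  exact this.of_eq fun s => by rcases s with ⟨x, fh, _ | ⟨q, ph⟩, rest⟩ <;> rfl

theorem contC_primrec : Primrec₂ contC := by
  have hx : Primrec fun p : Pt => p.1.1 := Primrec.fst.comp Primrec.fst
  have hfh : Primrec fun p : Pt => p.1.2.1 := (Primrec.fst.comp Primrec.snd).comp Primrec.fst
  have hpd : Primrec fun p : Pt => p.1.2.2.1 :=
    (Primrec.fst.comp (Primrec.snd.comp Primrec.snd)).comp Primrec.fst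
  have hrest : Primrec fun p : Pt => p.1.2.2.2 :=
    (Primrec.snd.comp (Primrec.snd.comp Primrec.snd)).comp Primrec.fst
  have hrb : Primrec fun p : Pt => p.2.1 := Primrec.fst.comp Primrec.snd
  have hrn : Primrec fun p : Pt => p.2.2 := Primrec.snd.comp Primrec.snd
  -- A branch (no pending query)
  have hA1 := Primrec.list_casesOn (f := fun p : Pt => p.1.2.2.2)
      (g := fun p : Pt => (some (Sum.inl p.2) : Option ((Bool × ℕ) ⊕ CState)))
      (h := fun _ _ => (none : Option ((Bool × ℕ) ⊕ CState))) hrest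
      (Primrec.option_some.comp (Primrec.sumInl.comp Primrec.snd))
      ((Primrec.const (none : Option ((Bool × ℕ) ⊕ CState))).to₂)
  have hA2 : Primrec fun p : Pt =>
      (some (Sum.inr ((p.1.1, p.1.2.1, some (p.2.2, ([] : List ℕ)), p.1.2.2.2) : CState)) :
        Option ((Bool × ℕ) ⊕ CState)) :=
    Primrec.option_some.comp (Primrec.sumInr.comp
      (hx.pair (hfh.pair ((Primrec.option_some.comp
        (hrn.pair (Primrec.const ([] : List ℕ)))).pair hrest))))
  have hA := Primrec.cond hrb hA1 hA2
  -- B branch (pending query) : on Zt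
  have hx' : Primrec fun z : Zt => z.1.1.1 := hx.comp Primrec.fst
  have hfh' : Primrec fun z : Zt => z.1.1.2.1 := hfh.comp Primrec.fst
  have hrest' : Primrec fun z : Zt => z.1.1.2.2.2 := hrest.comp Primrec.fst
  have hrb' : Primrec fun z : Zt => z.1.2.1 := hrb.comp Primrec.fst
  have hrn' : Primrec fun z : Zt => z.1.2.2 := hrn.comp Primrec.fst
  have hq' : Primrec fun z : Zt => z.2.1 := Primrec.fst.comp Primrec.snd
  have hph' : Primrec fun z : Zt => z.2.2 := Primrec.snd.comp Primrec.snd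
  have hB1 : Primrec fun z : Zt =>
      (some (Sum.inr ((z.1.1.1, z.1.1.2.1 ++ [z.1.2.2], none, z.1.1.2.2.2) : CState)) :
        Option ((Bool × ℕ) ⊕ CState)) :=
    Primrec.option_some.comp (Primrec.sumInr.comp
      (hx'.pair ((Primrec.list_append.comp hfh'
          (Primrec.list_cons.comp hrn' (Primrec.const ([] : List ℕ)))).pair
        ((Primrec.const (none : Option (ℕ × List ℕ))).pair hrest'))))
  have hh : Primrec₂ fun (z : Zt) (p : ℕ × List ℕ) =>
      (some (Sum.inr ((z.1.1.1, z.1.1.2.1, some (z.2.1, z.2.2 ++ [p.1]), p.2) : CState)) :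
        Option ((Bool × ℕ) ⊕ CState)) := by
    show Primrec fun w : Zt × (ℕ × List ℕ) =>
      (some (Sum.inr ((w.1.1.1.1, w.1.1.1.2.1, some (w.1.2.1, w.1.2.2 ++ [w.2.1]), w.2.2) : CState)) :
        Option ((Bool × ℕ) ⊕ CState))
    exact Primrec.option_some.comp (Primrec.sumInr.comp
      (((hx'.comp Primrec.fst).pair ((hfh'.comp Primrec.fst).pair
        ((Primrec.option_some.comp ((hq'.comp Primrec.fst).pair
          (Primrec.list_append.comp (hph'.comp Primrec.fst)
            (Primrec.list_cons.comp (Primrec.fst.comp Primrec.snd)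
              (Primrec.const ([] : List ℕ)))))).pair
          (Primrec.snd.comp Primrec.snd))))))
  have hB2 := Primrec.list_casesOn hrest'
    (Primrec.option_some.comp (Primrec.sumInl.comp ((Primrec.const false).pair hrn'))) hh
  have hB := Primrec.cond hrb' hB1 hB2
  have hall := Primrec.option_casesOn hpd hA hB.to₂
  refine hall.of_eq ?_
  rintro ⟨⟨x, fh, pd, rest⟩, b, n⟩
  rcases pd with _ | ⟨q, ph⟩ <;> cases b <;> rcases rest with _ | ⟨a, r⟩ <;> rfl

theorem cstep_partrec (cf cp : ℕ) : Partrec (cstep cf cp) := by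
  have h1 : Partrec fun s : CState => PsiU (selC cf cp s) (inC s) :=
    psiU_partrec.comp (selC_primrec cf cp).to_comp inC_primrec.to_comp
  exact h1.bind (Computable.ofOption contC_primrec.to_comp)

theorem compM_partrec (cf cp : ℕ) : Partrec (compM cf cp) := by
  have hfix : Partrec (PFun.fix (cstep cf cp)) := (cstep_partrec cf cp).fix
  have h1 : Partrec fun l : List ℕ => (Part.ofOption l.head? : Part ℕ) :=
    Computable.ofOption Primrec.list_head?.to_comp
  exact h1.bind ((hfix.comp (Primrec.to_comp (Primrec.snd.pair
    ((Primrec.const ([] : List ℕ)).pair ((Primrec.const (none : Option (ℕ × List ℕ))).pair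
      (Primrec.list_tail.comp Primrec.fst)))))).to₂)

theorem compM_cons (cf cp x : ℕ) (l : List ℕ) :
    compM cf cp (x :: l) = PFun.fix (cstep cf cp) (x, [], none, l) := by
  simp [compM]

theorem cstep_mem {cf cp : ℕ} {s : CState} {r : Bool × ℕ} {w : (Bool × ℕ) ⊕ CState}
    (hr : r ∈ PsiU (selC cf cp s) (inC s)) (hw : contC s r = some w) :
    w ∈ cstep cf cp s := by
  refine Part.mem_bind_iff.2 ⟨r, hr, ?_⟩
  rw [hw]; exact Part.mem_some _

section correctness

variable {cf cp : ℕ} {o : ℕ →. ℕ}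

theorem inner_consume {q a x : ℕ} :
    ∀ (D ph fh rest : List ℕ) (b : Bool × ℕ),
    ValidHist (PsiU cp) o q (ph ++ D) → (true, a) ∈ PsiU cp (q :: (ph ++ D)) →
    b ∈ PFun.fix (cstep cf cp) (x, fh ++ [a], none, rest) →
    b ∈ PFun.fix (cstep cf cp) (x, fh, some (q, ph), D ++ rest) := by
  intro D
  induction D with
  | nil =>
    intro ph fh rest b _ hm hb
    rw [List.append_nil] at hm
    rw [List.nil_append]
    have hstep : (Sum.inr ((x, fh ++ [a], none, rest) : CState) : (Bool × ℕ) ⊕ CState) ∈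
        cstep cf cp (x, fh, some (q, ph), rest) :=
      cstep_mem (r := (true, a)) hm rfl
    exact PFun.mem_fix_iff.2 (Or.inr ⟨_, hstep, hb⟩)
  | cons d D ih =>
    intro ph fh rest b hv hm hb
    have hj : ph.length < (ph ++ d :: D).length := by
      simp [List.length_append]
    obtain ⟨qq, hqq, _⟩ := hv ph.length hj
    rw [List.take_left] at hqq
    have hstep : (Sum.inr ((x, fh, some (q, ph ++ [d]), D ++ rest) : CState) : (Bool × ℕ) ⊕ CState) ∈
        cstep cf cp (x, fh, some (q, ph), d :: (D ++ rest)) :=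
      cstep_mem (r := (false, qq)) hqq rfl
    refine PFun.mem_fix_iff.2 (Or.inr ⟨_, hstep, ?_⟩)
    have := ih (ph ++ [d]) fh rest b ?_ ?_ hb
    · exact this
    · rwa [List.append_cons] at hv
    · rwa [List.append_cons] at hm

theorem inner_emit {q x : ℕ} :
    ∀ (R ph fh : List ℕ) (d : ℕ) (D : List ℕ),
    ValidHist (PsiU cp) o q (ph ++ R ++ d :: D) →
    ∃ q', ((false, q') : Bool × ℕ) ∈ PFun.fix (cstep cf cp) (x, fh, some (q, ph), R) ∧
      d ∈ o q' := by
  intro R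
  induction R with
  | nil =>
    intro ph fh d D hv
    have hj : ph.length < (ph ++ [] ++ d :: D).length := by simp
    obtain ⟨qq, hqq, hd⟩ := hv ph.length hj
    have ht : (ph ++ [] ++ d :: D).take ph.length = ph := by
      simp only [List.append_nil]; exact List.take_left
    rw [ht] at hqq
    have hidx : (ph ++ [] ++ d :: D)[ph.length]'hj = d := by
      simp only [List.append_nil]
      rw [List.getElem_append_right (le_refl _)]
      simp
    rw [hidx] at hd
    refine ⟨qq, ?_, hd⟩
    refine PFun.fix_stop ?_
    exact cstep_mem (r := (false, qq)) hqq rfl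
  | cons a0 R' ih =>
    intro ph fh d D hv
    have hj : ph.length < (ph ++ a0 :: R' ++ d :: D).length := by simp
    obtain ⟨qq, hqq, _⟩ := hv ph.length hj
    have ht : (ph ++ a0 :: R' ++ d :: D).take ph.length = ph := by
      rw [List.append_assoc, List.take_left]
    rw [ht] at hqq
    have hstep : (Sum.inr ((x, fh, some (q, ph ++ [a0]), R') : CState) : (Bool × ℕ) ⊕ CState) ∈
        cstep cf cp (x, fh, some (q, ph), a0 :: R') :=
      cstep_mem (r := (false, qq)) hqq rfl
    obtain ⟨q', hq', hd⟩ := ih (ph ++ [a0]) fh d D (by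
      rwa [show ph ++ [a0] ++ R' ++ d :: D = ph ++ a0 :: R' ++ d :: D by simp] )
    exact ⟨q', PFun.mem_fix_iff.2 (Or.inr ⟨_, hstep, hq'⟩), hd⟩

def RestL (SH : ℕ → List ℕ) (i N : ℕ) : List ℕ := ((List.range' i (N - i)).map SH).flatten

theorem restL_last (SH : ℕ → List ℕ) (N : ℕ) : RestL SH N N = [] := by
  simp [RestL]

theorem restL_succ (SH : ℕ → List ℕ) {i N : ℕ} (hi : i < N) :
    RestL SH i N = SH i ++ RestL SH (i + 1) N := by
  have : N - i = (N - (i + 1)) + 1 := by omega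
  rw [RestL, this, List.range'_succ, List.map_cons, List.flatten_cons, RestL]

variable {x m : ℕ} {FH : List ℕ} {Q : ℕ → ℕ} {SH : ℕ → List ℕ}

theorem outer_run
    (hQ : ∀ i (hi : i < FH.length), (false, Q i) ∈ PsiU cf (x :: FH.take i))
    (hSH1 : ∀ i (hi : i < FH.length), ValidHist (PsiU cp) o (Q i) (SH i))
    (hSH2 : ∀ i (hi : i < FH.length), (true, FH[i]'hi) ∈ PsiU cp (Q i :: SH i))
    (hm : (true, m) ∈ PsiU cf (x :: FH)) :
    ∀ (d i : ℕ), i + d = FH.length →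
    ((true, m) : Bool × ℕ) ∈ PFun.fix (cstep cf cp) (x, FH.take i, none, RestL SH i FH.length) := by
  intro d
  induction d with
  | zero =>
    intro i hi
    obtain rfl : i = FH.length := by omega
    rw [List.take_length, restL_last]
    exact PFun.fix_stop (cstep_mem (r := (true, m)) hm rfl)
  | succ d ih =>
    intro i hi
    have hlt : i < FH.length := by omega
    have hstep : (Sum.inr ((x, FH.take i, some (Q i, []), RestL SH i FH.length) : CState) :
        (Bool × ℕ) ⊕ CState) ∈ cstep cf cp (x, FH.take i, none, RestL SH i FH.length) :=
      cstep_mem (r := (false, Q i)) (hQ i hlt) rfl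
    refine PFun.mem_fix_iff.2 (Or.inr ⟨_, hstep, ?_⟩)
    rw [restL_succ SH hlt]
    refine inner_consume (o := o) (a := FH[i]'hlt) (SH i) [] _ _ _ ?_ ?_ ?_
    · simpa using hSH1 i hlt
    · simpa using hSH2 i hlt
    · rw [List.take_concat_get']
      exact ih (i + 1) (by omega)

theorem outer_emit
    (hQ : ∀ i (hi : i < FH.length), (false, Q i) ∈ PsiU cf (x :: FH.take i))
    (hSH1 : ∀ i (hi : i < FH.length), ValidHist (PsiU cp) o (Q i) (SH i))
    (hSH2 : ∀ i (hi : i < FH.length), (true, FH[i]'hi) ∈ PsiU cp (Q i :: SH i)) :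
    ∀ (d i : ℕ), i + d = FH.length → ∀ (t : ℕ) (ht : t < (RestL SH i FH.length).length),
    ∃ q', ((false, q') : Bool × ℕ) ∈
        PFun.fix (cstep cf cp) (x, FH.take i, none, (RestL SH i FH.length).take t) ∧
      ((RestL SH i FH.length)[t]'ht) ∈ o q' := by
  intro d
  induction d with
  | zero =>
    intro i hi t ht
    obtain rfl : i = FH.length := by omega
    rw [restL_last] at ht
    simp at ht
  | succ d ih =>
    intro i hi t ht
    have hlt : i < FH.length := by omega
    have hsp := restL_succ SH hlt
    by_cases hc : t < (SH i).length
    · -- emit inside segment i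
      have htake : (RestL SH i FH.length).take t = (SH i).take t := by
        rw [hsp, List.take_append_of_le_length (le_of_lt hc)]
      have hidx : (RestL SH i FH.length)[t]'ht = (SH i)[t]'hc := by
        rw [List.getElem_of_eq hsp ht]
        exact List.getElem_append_left hc
      have hstep : (Sum.inr ((x, FH.take i, some (Q i, []), (SH i).take t) : CState) :
          (Bool × ℕ) ⊕ CState) ∈ cstep cf cp (x, FH.take i, none, (SH i).take t) :=
        cstep_mem (r := (false, Q i)) (hQ i hlt) rfl
      have hv' : ValidHist (PsiU cp) o (Q i)
          ([] ++ (SH i).take t ++ ((SH i)[t]'hc) :: (SH i).drop (t+1)) := by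
        have : (SH i).take t ++ ((SH i)[t]'hc) :: (SH i).drop (t+1) = SH i := by
          rw [← List.drop_eq_getElem_cons hc, List.take_append_drop]
        rw [List.nil_append, this]
        exact hSH1 i hlt
      obtain ⟨q', hq', hd⟩ := inner_emit (q := Q i) (x := x)
        ((SH i).take t) [] (FH.take i) ((SH i)[t]'hc) ((SH i).drop (t+1)) hv'
      refine ⟨q', ?_, by rwa [hidx]⟩
      rw [htake]
      exact PFun.mem_fix_iff.2 (Or.inr ⟨_, hstep, hq'⟩)
    · -- move past segment i
      push_neg at hc
      set t' := t - (SH i).length with ht'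
      have htt : t = (SH i).length + t' := by omega
      have ht2 : t' < (RestL SH (i+1) FH.length).length := by
        rw [hsp, List.length_append] at ht; omega
      obtain ⟨q', hq', hd⟩ := ih (i + 1) (by omega) t' ht2
      have htake : (RestL SH i FH.length).take t = SH i ++ (RestL SH (i+1) FH.length).take t' := by
        rw [hsp, htt, List.take_append, List.take_of_length_le (by omega), Nat.add_sub_cancel_left]
      have hidx : (RestL SH i FH.length)[t]'ht = (RestL SH (i+1) FH.length)[t']'ht2 := by
        rw [List.getElem_of_eq hsp ht]
        rw [List.getElem_append_right hc]
      have hstep : (Sum.inr ((x, FH.take i, some (Q i, []),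
          SH i ++ (RestL SH (i+1) FH.length).take t') : CState) :
          (Bool × ℕ) ⊕ CState) ∈ cstep cf cp (x, FH.take i, none,
            SH i ++ (RestL SH (i+1) FH.length).take t') :=
        cstep_mem (r := (false, Q i)) (hQ i hlt) rfl
      refine ⟨q', ?_, by rwa [hidx]⟩
      rw [htake]
      refine PFun.mem_fix_iff.2 (Or.inr ⟨_, hstep, ?_⟩)
      refine inner_consume (o := o) (a := FH[i]'hlt) (SH i) [] _ _ _ ?_ ?_ ?_
      · simpa using hSH1 i hlt
      · simpa using hSH2 i hlt
      · rw [List.take_concat_get']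
        exact hq'

end correctness

theorem red_comp {cf cp : ℕ} {f gm o : ℕ →. ℕ}
    (h1 : ∀ n m, m ∈ f n → HaltsTo (PsiU cf) gm n m)
    (h2 : ∀ q a, a ∈ gm q → HaltsTo (PsiU cp) o q a) :
    ∀ n m, m ∈ f n → HaltsTo (compM cf cp) o n m := by
  intro n m hmem
  obtain ⟨FH, hvF, hm⟩ := h1 n m hmem
  have H : ∀ i, ∃ (q : ℕ) (H2 : List ℕ), ∀ hi : i < FH.length,
      (false, q) ∈ PsiU cf (n :: FH.take i) ∧ ValidHist (PsiU cp) o q H2 ∧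
      (true, FH[i]'hi) ∈ PsiU cp (q :: H2) := by
    intro i
    by_cases hi : i < FH.length
    · obtain ⟨q, hq, hgm⟩ := hvF i hi
      obtain ⟨H2, hv2, hm2⟩ := h2 q (FH[i]'hi) hgm
      exact ⟨q, H2, fun _ => ⟨hq, hv2, hm2⟩⟩
    · exact ⟨0, [], fun h => absurd h hi⟩
  choose Q SH hQS using H
  have hQ : ∀ i (hi : i < FH.length), (false, Q i) ∈ PsiU cf (n :: FH.take i) :=
    fun i hi => (hQS i hi).1
  have hSH1 : ∀ i (hi : i < FH.length), ValidHist (PsiU cp) o (Q i) (SH i) :=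
    fun i hi => (hQS i hi).2.1
  have hSH2 : ∀ i (hi : i < FH.length), (true, FH[i]'hi) ∈ PsiU cp (Q i :: SH i) :=
    fun i hi => (hQS i hi).2.2
  refine ⟨RestL SH 0 FH.length, ?_, ?_⟩
  · intro k hk
    obtain ⟨q', hfix, hoq⟩ := outer_emit hQ hSH1 hSH2 FH.length 0 (by omega) k hk
    refine ⟨q', ?_, hoq⟩
    rw [compM_cons]
    simpa using hfix
  · rw [compM_cons]
    have := outer_run hQ hSH1 hSH2 hm FH.length 0 (by omega)
    simpa using this


theorem subTuringLE_refl (g : ℕ →. ℕ) : SubTuringLE g g := by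
  refine ⟨idMach, idMach_partrec, fun x m hm => ⟨[m], ?_, ?_⟩⟩
  · intro k hk
    simp only [List.length_cons, List.length_nil] at hk
    have hk0 : k = 0 := by omega
    subst hk0
    refine ⟨x, ?_, hm⟩
    simp only [List.take_zero]
    show (false, x) ∈ Part.ofOption (idO [x])
    simp [idO]
  · show (true, m) ∈ Part.ofOption (idO [x, m])
    simp [idO]

theorem subTuringLE_trans {f g k : ℕ →. ℕ} (h1 : SubTuringLE f g) (h2 : SubTuringLE g k) :
    SubTuringLE f k := by
  obtain ⟨cf, hcf⟩ := subTuringLE_iff.1 h1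
  obtain ⟨cp, hcp⟩ := subTuringLE_iff.1 h2
  exact ⟨compM cf cp, compM_partrec cf cp, red_comp hcf hcp⟩

/-- a machine that looks up a code and a new input from its input -/
def mach (G : ℕ → Option (ℕ × ℕ)) : List ℕ →. Bool × ℕ := fun l =>
  (Part.ofOption l.head?).bind fun z =>
    (Part.ofOption (G z)).bind fun dx => PsiU dx.1 (dx.2 :: l.tail)

theorem mach_partrec {G : ℕ → Option (ℕ × ℕ)} (hG : Computable G) : Partrec (mach G) := by
  have h1 : Partrec fun l : List ℕ => (Part.ofOption l.head? : Part ℕ) :=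
    Computable.ofOption Primrec.list_head?.to_comp
  refine h1.bind ?_
  have h2 : Partrec fun p : List ℕ × ℕ => (Part.ofOption (G p.2) : Part (ℕ × ℕ)) :=
    Computable.ofOption (hG.comp Computable.snd)
  refine h2.bind ?_
  have h3 : Partrec fun w : (List ℕ × ℕ) × (ℕ × ℕ) => PsiU w.2.1 (w.2.2 :: w.1.1.tail) :=
    psiU_partrec.comp (Primrec.fst.comp Primrec.snd).to_comp
      ((Primrec.list_cons.comp (Primrec.snd.comp Primrec.snd)
        (Primrec.list_tail.comp (Primrec.fst.comp Primrec.fst))).to_comp)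
  exact h3

theorem mach_eval {G : ℕ → Option (ℕ × ℕ)} {z d xx : ℕ} (hz : G z = some (d, xx))
    (as : List ℕ) : mach G (z :: as) = PsiU d (xx :: as) := by
  simp [mach, hz]

/-- finite lookup tables -/
def tabF (key : ℕ → ℕ) (val : ℕ → ℕ × ℕ) : ℕ → ℕ → Option (ℕ × ℕ)
  | 0 => fun _ => none
  | (k+1) => fun z => if z = key k then some (val k) else tabF key val k z

theorem tabF_computable (key : ℕ → ℕ) (val : ℕ → ℕ × ℕ) :
    ∀ k, Computable (tabF key val k) := by
  intro k
  induction k with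
  | zero => exact Computable.const none
  | succ k ih =>
    have hc : Computable fun z : ℕ => decide (z = key k) :=
      (Primrec.eq.decide.comp Primrec.id (Primrec.const (key k))).to_comp
    have := Computable.cond hc (Computable.const (some (val k))) ih
    exact this.of_eq fun z => by by_cases hz : z = key k <;> simp [hz, tabF]

theorem tabF_hit {key : ℕ → ℕ} {val : ℕ → ℕ × ℕ}
    (hinj : ∀ a b, key a = key b → a = b) :
    ∀ k e, e < k → tabF key val k (key e) = some (val e) := by
  intro k
  induction k with
  | zero => intro e he; omega
  | succ k ih =>
    intro e he
    by_cases hek : e = k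
    · subst hek; simp [tabF]
    · have : key e ≠ key k := fun hc => hek (hinj _ _ hc)
      simp only [tabF, if_neg this]
      exact ih e (by omega)

theorem tabF_miss {key : ℕ → ℕ} {val : ℕ → ℕ × ℕ} :
    ∀ k z, (∀ k', k' < k → z ≠ key k') → tabF key val k z = none := by
  intro k
  induction k with
  | zero => intro z _; rfl
  | succ k ih =>
    intro z hz
    simp only [tabF, if_neg (hz k (by omega))]
    exact ih z fun k' hk' => hz k' (by omega)

theorem no_inf_of_strictly_decreasing (g : ℕ → ℕ →. ℕ) (h : ℕ →. ℕ)
    (hdec : ∀ n, SubTuringLE (g (n + 1)) (g n) ∧ ¬ SubTuringLE (g n) (g (n + 1)))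
    (hlb : ∀ n, SubTuringLE h (g n)) :
    ∃ f : ℕ →. ℕ, (∀ n, SubTuringLE f (g n)) ∧ ¬ SubTuringLE f h := by
  -- no `g e` reduces to `h`
  have hnot : ∀ e, ¬ SubTuringLE (g e) h := fun e hle =>
    (hdec e).2 (subTuringLE_trans hle (hlb (e + 1)))
  -- the chain reduces downwards
  have hchain : ∀ mm e, mm ≤ e → SubTuringLE (g e) (g mm) := by
    intro mm e
    induction e with
    | zero =>
      intro hme
      obtain rfl : mm = 0 := Nat.le_zero.1 hme
      exact subTuringLE_refl _
    | succ e ih =>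
      intro hme
      rcases Nat.eq_or_lt_of_le hme with hh | hh
      · subst hh; exact subTuringLE_refl _
      · exact subTuringLE_trans ((hdec e).1) (ih (by omega))
  -- codes for the chain reductions
  set D : ℕ → ℕ → ℕ := fun e mm =>
    if hme : mm ≤ e then (subTuringLE_iff.1 (hchain mm e hme)).choose else 0 with hDdef
  have hD : ∀ e mm (hme : mm ≤ e), Red (D e mm) (g e) (g mm) := by
    intro e mm hme
    simp only [hDdef, dif_pos hme]
    exact (subTuringLE_iff.1 (hchain mm e hme)).choose_spec
  set sE : ℕ → ℕ := fun e => Encodable.encode (List.ofFn fun i : Fin (e + 1) => D e i) with hsE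
  set Zf : ℕ → ℕ → ℕ := fun e xx => Nat.pair e (Nat.pair xx (sE e)) with hZf
  -- diagonalization witnesses
  have hdiag : ∀ e, ∃ xx v, v ∈ g e xx ∧ ¬ HaltsTo (PsiU e) h (Zf e xx) v := by
    intro e
    by_contra hcon
    push_neg at hcon
    apply hnot e
    refine ⟨mach fun xx => some (e, Zf e xx), mach_partrec ?_, ?_⟩
    · refine Primrec.to_comp ?_
      exact Primrec.option_some.comp ((Primrec.const e).pair
        (Primrec₂.natPair.comp (Primrec.const e)
          (Primrec₂.natPair.comp Primrec.id (Primrec.const (sE e)))))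
    · intro n v hv
      exact haltsTo_congr (fun as => mach_eval rfl as) (hcon n v hv)
  choose xw vw hv hnd using hdiag
  set Z : ℕ → ℕ := fun e => Zf e (xw e) with hZ
  have hZinj : ∀ a b, Z a = Z b → a = b := by
    intro a b hab
    have := congrArg (fun z => z.unpair.1) hab
    simpa [hZ, hZf, Nat.unpair_pair] using this
  -- the witness function
  refine ⟨fun z => Part.assert (∃ e, z = Z e) fun H => Part.some (vw H.choose), ?_, ?_⟩
  · -- f is below every g mm
    intro mm
    set Gm : ℕ → Option (ℕ × ℕ) := fun z =>
      Option.casesOn (tabF Z (fun k => (constCode (true, vw k), 0)) mm z)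
        (Option.map (fun dd => (dd, z.unpair.2.unpair.1))
          (((Encodable.decode (z.unpair.2.unpair.2)) : Option (List ℕ)).bind
            fun L => L[mm]?)) some with hGm
    have hGmc : Computable Gm := by
      have h1 : Computable fun z : ℕ => tabF Z (fun k => (constCode (true, vw k), 0)) mm z :=
        tabF_computable _ _ mm
      have h2 : Primrec fun z : ℕ =>
          (Option.map (fun dd => (dd, z.unpair.2.unpair.1))
            (((Encodable.decode (z.unpair.2.unpair.2)) : Option (List ℕ)).bind
              fun L => L[mm]?)) := by
        have hz221 : Primrec fun z : ℕ => z.unpair.2.unpair.1 :=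
          Primrec.fst.comp (Primrec.unpair.comp (Primrec.snd.comp Primrec.unpair))
        have hz222 : Primrec fun z : ℕ => z.unpair.2.unpair.2 :=
          Primrec.snd.comp (Primrec.unpair.comp (Primrec.snd.comp Primrec.unpair))
        have hdec2 : Primrec fun z : ℕ => ((Encodable.decode (z.unpair.2.unpair.2)) : Option (List ℕ)) :=
          Primrec.decode.comp hz222
        have hbind : Primrec fun z : ℕ =>
            (((Encodable.decode (z.unpair.2.unpair.2)) : Option (List ℕ)).bind fun L => L[mm]?) :=
          Primrec.option_bind hdec2 ((Primrec.list_getElem?.comp Primrec.snd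
            (Primrec.const mm)).to₂)
        exact Primrec.option_map hbind ((Primrec.pair Primrec.snd
          (hz221.comp Primrec.fst)).to₂)
      have := Computable.option_casesOn h1 h2.to_comp
        ((Primrec.option_some.comp Primrec.snd).to_comp.to₂)
      exact this.of_eq fun z => by
        rcases htz : tabF Z (fun k => (constCode (true, vw k), 0)) mm z with _ | w <;>
          simp [hGm, htz]
    refine ⟨mach Gm, mach_partrec hGmc, ?_⟩
    intro z w hw
    obtain ⟨H, hget⟩ := Part.mem_assert_iff.1 hw
    obtain ⟨e, rfl⟩ := id H
    obtain rfl : w = vw e := by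
      have h1 : w = vw H.choose := Part.mem_some_iff.1 hget
      have h2 : e = H.choose := hZinj _ _ H.choose_spec
      rw [h1, ← h2]
    by_cases hem : e < mm
    · -- in the lookup table
      have htab := tabF_hit (val := fun k => (constCode (true, vw k), 0)) hZinj mm e hem
      have hGZ : Gm (Z e) = some (constCode (true, vw e), 0) := by
        simp only [hGm]
        rw [htab]
      exact haltsTo_congr (fun as => mach_eval hGZ as) haltsTo_constCode
    · -- use the chain code
      push_neg at hem
      have htab := tabF_miss (key := Z) (val := fun k => (constCode (true, vw k), 0)) mm (Z e)
        (fun k' hk' hc => by have := hZinj _ _ hc; omega)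
      have hup : (Z e).unpair.2.unpair.1 = xw e ∧ (Z e).unpair.2.unpair.2 = sE e := by
        simp [hZ, hZf, Nat.unpair_pair]
      have hgets : ((Encodable.decode ((Z e).unpair.2.unpair.2) : Option (List ℕ)).bind
          fun L => L[mm]?) = some (D e mm) := by
        rw [hup.2]
        simp only [hsE, Encodable.encodek, Option.bind_some]
        rw [List.getElem?_ofFn]
        have hmm1 : mm < e + 1 := by omega
        simp [hmm1]
      have hGZ : Gm (Z e) = some (D e mm, xw e) := by
        simp only [hGm]
        rw [htab, hgets, hup.1]
        rfl
      refine haltsTo_congr (fun as => mach_eval hGZ as) ?_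
      exact hD e mm hem (xw e) (vw e) (hv e)
  · -- f is not below h
    intro hle
    obtain ⟨c, hc⟩ := subTuringLE_iff.1 hle
    apply hnd c
    apply hc (Z c) (vw c)
    refine Part.mem_assert_iff.2 ⟨⟨c, rfl⟩, Part.mem_some_iff.2 ?_⟩
    exact congrArg vw (hZinj _ _ (Exists.choose_spec (⟨c, rfl⟩ : ∃ e, Z c = Z e)))
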